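/- arXiv:1906.11691 — 7 statements merged into one kernel-verified Lean document; each statement's English description precedes it below -/
import Mathlib

section
/- If (I, A₂, A₃) is a triple of 3×3 matrices over 𝔽_q (I the identity) whose 𝔽_q-span is a [3×3;3]-MRD code, then the characteristic polynomial of A₂ is irreducible over 𝔽_q. -/
open Matrix Polynomial

/-- A `[3×3;3]`-MRD code: a 3-dimensional `F`-subspace of the `3×3` matrices over `F`
in which every nonzero matrix is invertible. -/
def IsMRD (F : Type*) [Field F] [Fintype F]
    (Cc : Submodule F (Matrix (Fin 3) (Fin 3) F)) : Prop :=
  Module.finrank F Cc = 3 ∧ ∀ M ∈ Cc, M ≠ 0 → IsUnit M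

/-- The companion matrix `C_f` of `f = x³ - c·x² - b·x - a`, with rows
`(0,0,a)`, `(1,0,b)`, `(0,1,c)`. -/
def cMat (F : Type*) [Field F] (a b c : F) : Matrix (Fin 3) (Fin 3) F :=
  !![0, 0, a; 1, 0, b; 0, 1, c]

/-- The monic cubic `x³ - c·x² - b·x - a`. -/
noncomputable def cubic (F : Type*) [Field F] (a b c : F) : Polynomial F :=
  X ^ 3 - C c * X ^ 2 - C b * X - C a

/-- The set `𝒮` of triples `(I, C_f, Z)` with `f` a monic irreducible cubic,
`Z` having first column `(0,0,1)ᵀ`, and the span of `{I, C_f, Z}` a `[3×3;3]`-MRD code. -/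
def mrdS (F : Type*) [Field F] [Fintype F] :
    Set (Matrix (Fin 3) (Fin 3) F × Matrix (Fin 3) (Fin 3) F × Matrix (Fin 3) (Fin 3) F) :=
  {t | t.1 = 1 ∧
       (∃ a b c : F, Irreducible (cubic F a b c) ∧ t.2.1 = cMat F a b c) ∧
       t.2.2 0 0 = 0 ∧ t.2.2 1 0 = 0 ∧ t.2.2 2 0 = 1 ∧
       IsMRD F (Submodule.span F {t.1, t.2.1, t.2.2})}

/-- `T_q`: all 3-dimensional subspaces of `F^{3×3}`. -/
def Tset (F : Type*) [Field F] [Fintype F] : Set (Submodule F (Matrix (Fin 3) (Fin 3) F)) :=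
  {Cc | Module.finrank F Cc = 3}

/-- `T̂_q`: all `[3×3;3]`-MRD codes. -/
def ThatSet (F : Type*) [Field F] [Fintype F] : Set (Submodule F (Matrix (Fin 3) (Fin 3) F)) :=
  {Cc | IsMRD F Cc}

/-- if the span of `(I, A₂, A₃)` is a `[3×3;3]`-MRD code, then the
characteristic polynomial of `A₂` is irreducible over `F`. -/
theorem charpoly_irreducible_of_MRD (F : Type*) [Field F] [Fintype F]
    (A₂ A₃ : Matrix (Fin 3) (Fin 3) F)
    (h : IsMRD F (Submodule.span F {1, A₂, A₃})) :
    Irreducible (Matrix.charpoly A₂) := by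
  classical
  obtain ⟨hdim, hinv⟩ := h
  have hmonic := A₂.charpoly_monic
  have hdeg : A₂.charpoly.natDegree = 3 := by
    simp [Matrix.charpoly_natDegree_eq_dim]
  rw [hmonic.irreducible_iff_roots_eq_zero_of_degree_le_three (by omega) (by omega)]
  by_contra hroots
  obtain ⟨μ, hμ⟩ := Multiset.exists_mem_of_ne_zero hroots
  rw [Polynomial.mem_roots hmonic.ne_zero] at hμ
  have hdet : (μ • (1 : Matrix (Fin 3) (Fin 3) F) - A₂).det = 0 := by
    have h0 : Polynomial.eval μ A₂.charpoly = 0 := hμ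
    rw [Matrix.charpoly, ← Polynomial.coe_evalRingHom, RingHom.map_det] at h0
    convert h0 using 2
    ext i j
    by_cases hij : i = j
    · subst hij
      simp [Matrix.charmatrix_apply_eq, Matrix.one_apply, Matrix.smul_apply]
    · simp [Matrix.charmatrix_apply_ne _ _ _ hij, Matrix.one_apply, hij, Matrix.smul_apply]
  have hne : A₂ ≠ μ • 1 := by
    intro heq
    have hsub : ({1, A₂, A₃} : Set (Matrix (Fin 3) (Fin 3) F)) ⊆
        (Submodule.span F {1, A₃} : Submodule F (Matrix (Fin 3) (Fin 3) F)) := by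
      intro x hx
      rcases hx with rfl | rfl | rfl
      · exact Submodule.subset_span (by simp)
      · rw [heq]
        exact Submodule.smul_mem _ _ (Submodule.subset_span (by simp))
      · exact Submodule.subset_span (by simp)
    have hle := Submodule.span_le.mpr hsub
    have h2 : Module.finrank F (Submodule.span F ({1, A₃} : Set (Matrix (Fin 3) (Fin 3) F))) ≤ 2 := by
      have hset : ({1, A₃} : Set (Matrix (Fin 3) (Fin 3) F)) =
          (({1, A₃} : Finset (Matrix (Fin 3) (Fin 3) F)) : Set (Matrix (Fin 3) (Fin 3) F)) := by
        simp
      rw [hset]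
      refine (finrank_span_finset_le_card _).trans ?_
      exact (Finset.card_insert_le _ _).trans (by simp)
    have := (Submodule.finrank_mono hle).trans h2
    omega
  have hmem : μ • (1 : Matrix (Fin 3) (Fin 3) F) - A₂ ∈ Submodule.span F {1, A₂, A₃} :=
    sub_mem (Submodule.smul_mem _ _ (Submodule.subset_span (by simp)))
      (Submodule.subset_span (by simp))
  have hne0 : μ • (1 : Matrix (Fin 3) (Fin 3) F) - A₂ ≠ 0 := by
    intro h0
    rw [sub_eq_zero] at h0
    exact hne h0.symm
  have hu := hinv _ hmem hne0
  rw [Matrix.isUnit_iff_isUnit_det, hdet] at hu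
  exact (not_isUnit_zero hu).elim
end

section
/- Let (k,k̂), (ℓ,ℓ̂) ∈ (L \ 𝔽_q)² and suppose k̂ ∉ {k^[1], k^[2]}. Then (Σ₁(k,k̂), Σ₂(k,k̂)) = (Σ₁(ℓ,ℓ̂), Σ₂(ℓ,ℓ̂)) if and only if there exists r ∈ {0,1,2} such that (ℓ, ℓ̂) = (k^[r], k̂^[r]). -/
open Matrix Polynomial

/-- `k ↦ k^{q^i}`, the `i`-th Frobenius power (with `q = |F|`), written `k^[i]`. -/
def frk (F : Type*) [Fintype F] (L : Type*) [Field L] (i : ℕ) (k : L) : L :=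
  k ^ (Fintype.card F ^ i)

/-- `σ₁(k) = k + k^[1] + k^[2]`. -/
def sig1 (F : Type*) [Fintype F] (L : Type*) [Field L] (k : L) : L :=
  k + frk F L 1 k + frk F L 2 k

/-- `σ₂(k) = k·k^[1] + k·k^[2] + k^[1]·k^[2]`. -/
def sig2 (F : Type*) [Fintype F] (L : Type*) [Field L] (k : L) : L :=
  k * frk F L 1 k + k * frk F L 2 k + frk F L 1 k * frk F L 2 k

/-- `σ₃(k) = k·k^[1]·k^[2]`. -/
def sig3 (F : Type*) [Fintype F] (L : Type*) [Field L] (k : L) : L :=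
  k * frk F L 1 k * frk F L 2 k

/-- `φ(k,k̂) = (k+k̂)(σ₁(k̂)−k̂) − σ₂(k̂)`. -/
def phiM (F : Type*) [Fintype F] (L : Type*) [Field L] (k khat : L) : L :=
  (k + khat) * (sig1 F L khat - khat) - sig2 F L khat

/-- `Σ₁(k,k̂)`, with rows `(0,0,σ₃(k))`, `(1,0,−σ₂(k))`, `(0,1,σ₁(k))`. -/
def Sig1 (F : Type*) [Fintype F] (L : Type*) [Field L] (k khat : L) :
    Matrix (Fin 3) (Fin 3) L :=
  !![0, 0, sig3 F L k; 1, 0, -(sig2 F L k); 0, 1, sig1 F L k]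

/-- `Σ₂(k,k̂)`. -/
def Sig2 (F : Type*) [Fintype F] (L : Type*) [Field L] (k khat : L) :
    Matrix (Fin 3) (Fin 3) L :=
  !![0, sig3 F L khat,
       sig1 F L k * sig3 F L khat + sig1 F L khat * sig3 F L k - sig2 F L (k * khat);
     0, -(sig2 F L khat), -(sig3 F L (k + khat));
     1, sig1 F L khat, sig1 F L k * sig1 F L khat - sig1 F L (k * khat)]


section SigmaAux

set_option linter.unusedSectionVars false

variable (F : Type*) [Field F] [Fintype F] (L : Type*) [Field L]

lemma frk_mul (i : ℕ) (a b : L) : frk F L i (a*b) = frk F L i a * frk F L i b := mul_pow ..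

lemma frk_frk (i j : ℕ) (a : L) : frk F L i (frk F L j a) = frk F L (j+i) a := by
  unfold frk; rw [← pow_mul, ← pow_add]

lemma frk_zero (a : L) : frk F L 0 a = a := by unfold frk; simp

variable [Algebra F L]

lemma frk_add (i : ℕ) (a b : L) : frk F L i (a+b) = frk F L i a + frk F L i b := by
  obtain ⟨p, hp⟩ := CharP.exists F
  haveI := hp
  haveI : CharP L p := charP_of_injective_algebraMap (algebraMap F L).injective p
  obtain ⟨n, hpp, hq⟩ := FiniteField.card F p
  haveI : Fact p.Prime := ⟨hpp⟩
  unfold frk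
  simp only [hq, ← pow_mul]
  exact add_pow_char_pow ..

lemma frk_three (hL : Module.finrank F L = 3) (a : L) : frk F L 3 a = a := by
  haveI : Module.Finite F L := Module.finite_of_finrank_pos (by rw [hL]; norm_num)
  haveI : Finite L := Module.finite_of_finite F
  haveI : Fintype L := Fintype.ofFinite L
  have hcard : Fintype.card L = Fintype.card F ^ 3 := by
    rw [Module.card_eq_pow_finrank (K := F) (V := L), hL]
  unfold frk
  rw [← hcard, FiniteField.pow_card]

lemma frk_one_fixed_mem (a : L) (h : frk F L 1 a = a) :
    a ∈ Set.range (algebraMap F L) := by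
  classical
  have hq1 : 1 < Fintype.card F := Fintype.one_lt_card
  set q := Fintype.card F with hqdef
  set P : Polynomial L := X ^ q - X with hP
  have hmonic : P.Monic := by
    apply monic_X_pow_sub
    rw [degree_X]
    exact_mod_cast hq1
  have hPne : P ≠ 0 := hmonic.ne_zero
  have hdeg : P.natDegree ≤ q := by
    refine le_trans (natDegree_sub_le _ _) ?_
    simp [natDegree_X_pow]
    omega
  have hroot : ∀ y : L, y ^ q = y → y ∈ P.roots.toFinset := by
    intro y hy
    rw [Multiset.mem_toFinset, mem_roots hPne]
    simp [hP, IsRoot, hy]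
  set T : Finset L := Finset.univ.image (algebraMap F L) with hT
  have hTsub : T ⊆ P.roots.toFinset := by
    intro y hy
    rw [hT, Finset.mem_image] at hy
    obtain ⟨c, -, rfl⟩ := hy
    apply hroot
    rw [← map_pow, FiniteField.pow_card]
  have hcardT : q ≤ T.card := by
    rw [hT, Finset.card_image_of_injective _ (algebraMap F L).injective, Finset.card_univ]
  have heq : T = P.roots.toFinset := by
    refine Finset.eq_of_subset_of_card_le hTsub ?_
    calc P.roots.toFinset.card ≤ P.roots.card := Multiset.toFinset_card_le _
      _ ≤ P.natDegree := P.card_roots'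
      _ ≤ q := hdeg
      _ ≤ T.card := hcardT
  have hx : a ∈ P.roots.toFinset := hroot a (by simpa [frk, hqdef] using h)
  rw [← heq, hT, Finset.mem_image] at hx
  obtain ⟨c, -, rfl⟩ := hx
  exact ⟨c, rfl⟩

variable (hL : Module.finrank F L = 3)
include hL

lemma f11 (a : L) : frk F L 1 (frk F L 1 a) = frk F L 2 a := frk_frk F L 1 1 a
lemma f12 (a : L) : frk F L 1 (frk F L 2 a) = a := by
  rw [frk_frk]; exact frk_three F L hL a
lemma f21 (a : L) : frk F L 2 (frk F L 1 a) = a := by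
  rw [frk_frk]; exact frk_three F L hL a
lemma f22 (a : L) : frk F L 2 (frk F L 2 a) = frk F L 1 a := by
  rw [frk_frk]
  have h4 : frk F L 1 (frk F L 3 a) = frk F L 4 a := frk_frk F L 1 3 a
  rw [frk_three F L hL a] at h4
  exact h4.symm

lemma sig1_frk (a : L) : sig1 F L (frk F L 1 a) = sig1 F L a := by
  unfold sig1; rw [f11 F L hL, f21 F L hL]; ring
lemma sig2_frk (a : L) : sig2 F L (frk F L 1 a) = sig2 F L a := by
  unfold sig2; rw [f11 F L hL, f21 F L hL]; ring
lemma sig3_frk (a : L) : sig3 F L (frk F L 1 a) = sig3 F L a := by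
  unfold sig3; rw [f11 F L hL, f21 F L hL]; ring

omit hL

lemma sig1_add (a b : L) : sig1 F L (a+b) = sig1 F L a + sig1 F L b := by
  unfold sig1; rw [frk_add, frk_add]; ring
lemma sig2_add (a b : L) : sig2 F L (a+b) =
    sig2 F L a + sig2 F L b + sig1 F L a * sig1 F L b - sig1 F L (a*b) := by
  unfold sig2 sig1; rw [frk_add, frk_add, frk_mul, frk_mul]; ring
lemma sig3_mul (a b : L) : sig3 F L (a*b) = sig3 F L a * sig3 F L b := by
  unfold sig3; rw [frk_mul, frk_mul]; ring

lemma orbit_of_sig_eq {x y : L} (h1 : sig1 F L x = sig1 F L y)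
    (h2 : sig2 F L x = sig2 F L y) (h3 : sig3 F L x = sig3 F L y) :
    y = x ∨ y = frk F L 1 x ∨ y = frk F L 2 x := by
  have key : (y - x) * (y - frk F L 1 x) * (y - frk F L 2 x) = 0 := by
    have e1 : (y - x) * (y - frk F L 1 x) * (y - frk F L 2 x)
        = y^3 - sig1 F L x * y^2 + sig2 F L x * y - sig3 F L x := by
      unfold sig1 sig2 sig3; ring
    have e2 : y^3 - sig1 F L y * y^2 + sig2 F L y * y - sig3 F L y = 0 := by
      unfold sig1 sig2 sig3; ring
    rw [e1, h1, h2, h3, e2]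
  rcases mul_eq_zero.mp key with h | h
  · rcases mul_eq_zero.mp h with h | h
    · exact Or.inl (sub_eq_zero.mp h)
    · exact Or.inr (Or.inl (sub_eq_zero.mp h))
  · exact Or.inr (Or.inr (sub_eq_zero.mp h))

include hL

lemma Sig1_frk (k khat : L) :
    Sig1 F L (frk F L 1 k) (frk F L 1 khat) = Sig1 F L k khat := by
  unfold Sig1
  rw [sig1_frk F L hL, sig2_frk F L hL, sig3_frk F L hL]

lemma Sig2_frk (k khat : L) :
    Sig2 F L (frk F L 1 k) (frk F L 1 khat) = Sig2 F L k khat := by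
  unfold Sig2
  simp only [← frk_mul, ← frk_add, sig1_frk F L hL, sig2_frk F L hL, sig3_frk F L hL]

end SigmaAux

/-- for `k, k̂, ℓ, ℓ̂ ∈ L \ F` with `k̂ ∉ {k^[1], k^[2]}`, the matrix
pairs `(Σ₁, Σ₂)` coincide iff `(ℓ, ℓ̂) = (k^[r], k̂^[r])` for some `r ∈ {0,1,2}`. -/
theorem Sigma_injectivity_generic (F : Type*) [Field F] [Fintype F]
    (L : Type*) [Field L] [Algebra F L] (hL : Module.finrank F L = 3)
    (k khat l lhat : L)
    (hk : k ∉ Set.range (algebraMap F L)) (hkhat : khat ∉ Set.range (algebraMap F L))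
    (hl : l ∉ Set.range (algebraMap F L)) (hlhat : lhat ∉ Set.range (algebraMap F L))
    (h1 : khat ≠ frk F L 1 k) (h2 : khat ≠ frk F L 2 k) :
    (Sig1 F L k khat = Sig1 F L l lhat ∧ Sig2 F L k khat = Sig2 F L l lhat) ↔
      ∃ r : Fin 3, l = frk F L (r : ℕ) k ∧ lhat = frk F L (r : ℕ) khat := by
  constructor
  · rintro ⟨hS1, hS2⟩
    -- entry extraction
    have s3k : sig3 F L k = sig3 F L l := by
      simpa [Sig1] using congrFun (congrFun hS1 0) 2
    have s2k : sig2 F L k = sig2 F L l := by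
      have h := congrFun (congrFun hS1 1) 2
      simp [Sig1] at h; exact h
    have s1k : sig1 F L k = sig1 F L l := by
      simpa [Sig1] using congrFun (congrFun hS1 2) 2
    have s3h : sig3 F L khat = sig3 F L lhat := by
      simpa [Sig2] using congrFun (congrFun hS2 0) 1
    have s2h : sig2 F L khat = sig2 F L lhat := by
      have h := congrFun (congrFun hS2 1) 1
      simp [Sig2] at h; exact h
    have s1h : sig1 F L khat = sig1 F L lhat := by
      simpa [Sig2] using congrFun (congrFun hS2 2) 1
    have e02 : sig1 F L k * sig3 F L khat + sig1 F L khat * sig3 F L k - sig2 F L (k*khat)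
        = sig1 F L l * sig3 F L lhat + sig1 F L lhat * sig3 F L l - sig2 F L (l*lhat) := by
      simpa [Sig2] using congrFun (congrFun hS2 0) 2
    have ssum3 : sig3 F L (k+khat) = sig3 F L (l+lhat) := by
      have h := congrFun (congrFun hS2 1) 2
      simp [Sig2] at h; exact h
    have e22 : sig1 F L k * sig1 F L khat - sig1 F L (k*khat)
        = sig1 F L l * sig1 F L lhat - sig1 F L (l*lhat) := by
      simpa [Sig2] using congrFun (congrFun hS2 2) 2
    have sprod1 : sig1 F L (k*khat) = sig1 F L (l*lhat) := by
      linear_combination sig1 F L khat * s1k + sig1 F L l * s1h - e22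
    have sprod2 : sig2 F L (k*khat) = sig2 F L (l*lhat) := by
      linear_combination sig3 F L khat * s1k + sig1 F L l * s3h
        + sig3 F L k * s1h + sig1 F L lhat * s3k - e02
    have sprod3 : sig3 F L (k*khat) = sig3 F L (l*lhat) := by
      rw [sig3_mul, sig3_mul, s3k, s3h]
    have ssum1 : sig1 F L (k+khat) = sig1 F L (l+lhat) := by
      rw [sig1_add, sig1_add, s1k, s1h]
    have ssum2 : sig2 F L (k+khat) = sig2 F L (l+lhat) := by
      rw [sig2_add, sig2_add]
      linear_combination s2k + s2h + sig1 F L khat * s1k + sig1 F L l * s1h - sprod1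
    have horbl := orbit_of_sig_eq F L s1k s2k s3k
    have horbh := orbit_of_sig_eq F L s1h s2h s3h
    have hP := orbit_of_sig_eq F L sprod1 sprod2 sprod3
    have hS := orbit_of_sig_eq F L ssum1 ssum2 ssum3
    -- basic nondegeneracy facts
    have hk0 : k ≠ 0 := fun h => hk ⟨0, by rw [map_zero, h]⟩
    have hkh0 : khat ≠ 0 := fun h => hkhat ⟨0, by rw [map_zero, h]⟩
    have hfne : ∀ (i : ℕ) (x : L), x ≠ 0 → frk F L i x ≠ 0 :=
      fun i x hx => pow_ne_zero _ hx
    have hne1 : ∀ x : L, x ∉ Set.range (algebraMap F L) → frk F L 1 x ≠ x :=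
      fun x hx h => hx (frk_one_fixed_mem F L x h)
    have hne2 : ∀ x : L, x ∉ Set.range (algebraMap F L) → frk F L 2 x ≠ x := by
      intro x hx h
      apply hne1 x hx
      have h12 := f12 F L hL x
      rw [h] at h12
      exact h12
    have hne12 : ∀ x : L, x ∉ Set.range (algebraMap F L) →
        frk F L 1 x ≠ frk F L 2 x := by
      intro x hx h
      apply hne1 x hx
      have h' := congrArg (frk F L 2) h
      rw [f21 F L hL, f22 F L hL] at h'
      exact h'.symm
    have hknk1 : frk F L 1 k ≠ k := hne1 k hk
    have hknk2 : frk F L 2 k ≠ k := hne2 k hk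
    have hk12 : frk F L 1 k ≠ frk F L 2 k := hne12 k hk
    have hhnk1 : frk F L 1 khat ≠ khat := hne1 khat hkhat
    have hhnk2 : frk F L 2 khat ≠ khat := hne2 khat hkhat
    have hh12 : frk F L 1 khat ≠ frk F L 2 khat := hne12 khat hkhat
    -- the two "hard" contradiction configurations
    have C1 : k * frk F L 1 khat = frk F L 2 k * frk F L 2 khat →
        k + frk F L 1 khat = frk F L 2 k + frk F L 2 khat → False := by
      intro hp hs
      have key : (frk F L 2 khat - k) * (k - frk F L 2 k) = 0 := by
        linear_combination hp - k * hs
      rcases mul_eq_zero.mp key with h | h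
      · have h' := congrArg (frk F L 1) (sub_eq_zero.mp h)
        rw [f12 F L hL] at h'
        exact h1 h'
      · exact hknk2 (sub_eq_zero.mp h).symm
    have C2 : k * frk F L 2 khat = frk F L 1 k * frk F L 1 khat →
        k + frk F L 2 khat = frk F L 1 k + frk F L 1 khat → False := by
      intro hp hs
      have key : (frk F L 1 khat - k) * (k - frk F L 1 k) = 0 := by
        linear_combination hp - k * hs
      rcases mul_eq_zero.mp key with h | h
      · have h' := congrArg (frk F L 2) (sub_eq_zero.mp h)
        rw [f21 F L hL] at h'
        exact h2 h'
      · exact hknk1 (sub_eq_zero.mp h).symm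
    clear hS1 hS2 s1k s2k s3k s1h s2h s3h e02 e22 sprod1 sprod2 sprod3 ssum1 ssum2 ssum3
    rcases horbl with rfl | rfl | rfl <;> rcases horbh with rfl | rfl | rfl <;>
      simp only [frk_mul, frk_add] at hP hS
    -- case (0,0)
    · exact ⟨0, (frk_zero F L l).symm, (frk_zero F L lhat).symm⟩
    -- case (0,1)
    · exfalso
      rcases hP with p | p | p
      · exact hhnk1 (mul_left_cancel₀ hk0 p)
      · exact hknk1 (mul_right_cancel₀ (hfne 1 khat hkh0) p).symm
      · rcases hS with s | s | s
        · exact hhnk1 (add_left_cancel s)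
        · exact hknk1 (add_right_cancel s).symm
        · exact C1 p s
    -- case (0,2)
    · exfalso
      rcases hP with p | p | p
      · exact hhnk2 (mul_left_cancel₀ hk0 p)
      · rcases hS with s | s | s
        · exact hhnk2 (add_left_cancel s)
        · exact C2 p s
        · exact hknk2 (add_right_cancel s).symm
      · exact hknk2 (mul_right_cancel₀ (hfne 2 khat hkh0) p).symm
    -- case (1,0)
    · exfalso
      rcases hP with p | p | p
      · exact hknk1 (mul_right_cancel₀ hkh0 p)
      · exact hhnk1 (mul_left_cancel₀ (hfne 1 k hk0) p).symm
      · have p' := congrArg (frk F L 2) p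
        simp only [frk_mul, f21 F L hL, f22 F L hL] at p'
        rcases hS with s | s | s
        · exact hknk1 (add_right_cancel s)
        · exact hhnk1 (add_left_cancel s).symm
        · have s' := congrArg (frk F L 2) s
          simp only [frk_add, f21 F L hL, f22 F L hL] at s'
          exact C2 p' s'
    -- case (1,1)
    · exact ⟨1, rfl, rfl⟩
    -- case (1,2)
    · exfalso
      rcases hP with p | p | p
      · have p' := congrArg (frk F L 2) p
        simp only [frk_mul, f21 F L hL, f22 F L hL] at p'
        rcases hS with s | s | s
        · have s' := congrArg (frk F L 2) s
          simp only [frk_add, f21 F L hL, f22 F L hL] at s'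
          exact C1 p' s'
        · exact hh12 (add_left_cancel s).symm
        · exact hk12 (add_right_cancel s)
      · exact hh12 (mul_left_cancel₀ (hfne 1 k hk0) p).symm
      · exact hk12 (mul_right_cancel₀ (hfne 2 khat hkh0) p)
    -- case (2,0)
    · exfalso
      rcases hP with p | p | p
      · exact hknk2 (mul_right_cancel₀ hkh0 p)
      · have p' := congrArg (frk F L 1) p
        simp only [frk_mul, f11 F L hL, f12 F L hL] at p'
        rcases hS with s | s | s
        · exact hknk2 (add_right_cancel s)
        · have s' := congrArg (frk F L 1) s
          simp only [frk_add, f11 F L hL, f12 F L hL] at s'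
          exact C1 p' s'
        · exact hhnk2 (add_left_cancel s).symm
      · exact hhnk2 (mul_left_cancel₀ (hfne 2 k hk0) p).symm
    -- case (2,1)
    · exfalso
      rcases hP with p | p | p
      · have p' := congrArg (frk F L 1) p
        simp only [frk_mul, f11 F L hL, f12 F L hL] at p'
        rcases hS with s | s | s
        · have s' := congrArg (frk F L 1) s
          simp only [frk_add, f11 F L hL, f12 F L hL] at s'
          exact C2 p' s'
        · exact hk12 (add_right_cancel s).symm
        · exact hh12 (add_left_cancel s)
      · exact hk12 (mul_right_cancel₀ (hfne 1 khat hkh0) p).symm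
      · exact hh12 (mul_left_cancel₀ (hfne 2 k hk0) p)
    -- case (2,2)
    · exact ⟨2, rfl, rfl⟩
  · rintro ⟨r, rfl, rfl⟩
    fin_cases r
    · constructor <;> simp [frk_zero]
    · exact ⟨Sig1_frk F L hL k khat |>.symm ▸ rfl, Sig2_frk F L hL k khat |>.symm ▸ rfl⟩
    · constructor
      · rw [show ((⟨2, by norm_num⟩ : Fin 3) : ℕ) = 2 from rfl,
          ← f11 F L hL k, ← f11 F L hL khat, Sig1_frk F L hL, Sig1_frk F L hL]
      · rw [show ((⟨2, by norm_num⟩ : Fin 3) : ℕ) = 2 from rfl,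
          ← f11 F L hL k, ← f11 F L hL khat, Sig2_frk F L hL, Sig2_frk F L hL]
end

section
/- The set 𝒮' = { (k,k̂) ∈ L² : 1, k, φ(k,k̂) are linearly independent over 𝔽_q and k̂ ∉ {k^[1], k^[2]} } has cardinality |𝒮'| = (q³−q)(q³−q²−q−2). In particular, 𝒮' is empty if and only if q = 2. -/
open Matrix Polynomial

/-- `𝒮'`: pairs `(k,k̂)` with `1, k, φ(k,k̂)` linearly independent over `F` and
`k̂ ∉ {k^[1], k^[2]}`. -/
def Sprime (F : Type*) [Field F] [Fintype F] (L : Type*) [Field L] [Algebra F L] :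
    Set (L × L) :=
  {p | LinearIndependent F ![(1 : L), p.1, phiM F L p.1 p.2] ∧
       p.2 ≠ frk F L 1 p.1 ∧ p.2 ≠ frk F L 2 p.1}


/-! The Frobenius `x ↦ x^q` generates `Gal(L/F)`, has order 3 and fixes exactly `F`. For `k ∈ F`
the vectors `1, k` are already dependent. For `k ∉ F`, `1, k, k²` is a basis of `L`, and
`1, k, φ(k,k̂)` are independent iff the `k²`-coordinate `Q(k̂)` of `φ(k,k̂)` is nonzero.
Translating `k̂` by `c ∈ F` adds `c` times the `k²`-coordinate of `k̂` to `Q(k̂)`, and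
`Q(y k) = -y(y+1)`. So, writing `k̂ = x + y k + z k²`, for `z ≠ 0` exactly one `x` makes `Q`
vanish, while for `z = 0` either all `x` do (`y ∈ {0, -1}`) or none: `Q` has `q² + q` zeros.
Both excluded points `k^[1], k^[2]` have `φ = k²`, so every `k ∉ F` contributes
`q³ - q² - q - 2` pairs. -/

open FiniteField Module Finset

lemma Module.Basis.linearIndependent_zero_one_iff {K V : Type*} [Field K] [AddCommGroup V]
    [Module K V] (b : Basis (Fin 3) K V) (v : V) :
    LinearIndependent K ![b 0, b 1, v] ↔ b.coord 2 v ≠ 0 := by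
  have : FiniteDimensional K V := b.finiteDimensional_of_finite
  rw [← and_iff_left_of_imp fun h : LinearIndependent K ![b 0, b 1, v] =>
    h.span_eq_top_of_card_eq_finrank' (by simp [finrank_eq_card_basis b]),
    is_basis_iff_det b, Basis.det_apply, Matrix.det_fin_three, isUnit_iff_ne_zero]
  simp [Basis.toMatrix_apply, Basis.repr_self]

section Counting

variable {F : Type*} [Field F] [Fintype F] [DecidableEq F]

lemma card_filter_add_mul_eq_zero {a b : F} (hb : b ≠ 0) : #{x | a + x * b = 0} = 1 := by
  rw [card_eq_one]
  refine ⟨-a / b, ?_⟩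
  ext x
  simp only [mem_filter, mem_univ, true_and, mem_singleton]
  constructor
  · intro h
    field_simp
    linear_combination h
  · rintro rfl
    field_simp
    ring

lemma card_filter_mul_add_one_eq_zero : #{y : F | -(y * (y + 1)) = 0} = 2 := by
  have : ({y : F | -(y * (y + 1)) = 0} : Finset F) = {0, -1} := by
    ext y
    simp [add_eq_zero_iff_eq_neg]
  rw [this, card_pair (by simp)]

lemma card_filter_add_mul_snd_eq_zero (G : F → F → F) :
    #{v : F × F × F | G v.2.1 v.2.2 + v.1 * v.2.2 = 0}
      = Fintype.card F * (Fintype.card F - 1) + Fintype.card F * #{y | G y 0 = 0} := by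
  have hfiber (y z : F) : #{x | G y z + x * z = 0}
      = if z = 0 then (if G y 0 = 0 then Fintype.card F else 0) else 1 := by
    split_ifs with hz hG
    · simp [hz, hG]
    · simp [hz, hG]
    · exact card_filter_add_mul_eq_zero hz
  have hline (A : ℕ) : ∑ z : F, (if z = 0 then A else 1) = A + (Fintype.card F - 1) := by
    rw [Fintype.sum_eq_add_sum_compl 0, if_pos rfl, sum_congr rfl fun z hz =>
      if_neg (mem_compl.mp hz ∘ mem_singleton.mpr), sum_const, card_compl, card_singleton,
      smul_eq_mul, mul_one]
  rw [card_filter, Fintype.sum_prod_type, sum_comm, Fintype.sum_prod_type]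
  simp_rw [← card_filter, hfiber, hline]
  rw [sum_add_distrib, sum_ite, sum_const_zero, add_zero, sum_const, sum_const, card_univ]
  simp only [smul_eq_mul]
  ring

end Counting

lemma phiM_eq {F L : Type*} [Fintype F] [Field L] (k m : L) :
    phiM F L k m = k * (frk F L 1 m + frk F L 2 m) - frk F L 1 m * frk F L 2 m := by
  simp only [phiM, sig1, sig2]
  ring

section Frobenius

variable {F L : Type*} [Field F] [Fintype F] [Field L] [Algebra F L]

local notation "Frob" => frobeniusAlgHom F L

lemma frk_one (x : L) : frk F L 1 x = Frob x := by
  simp [frk]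

lemma frk_two (x : L) : frk F L 2 x = Frob (Frob x) := by
  simp [frk, pow_two, pow_mul]

lemma mem_range_algebraMap_of_frobeniusAlgHom_eq [Finite L] {x : L} (hx : Frob x = x) :
    x ∈ Set.range (algebraMap F L) := by
  rw [IsGalois.mem_range_algebraMap_iff_fixed]
  intro σ
  obtain ⟨n, rfl⟩ := (bijective_frobeniusAlgEquivOfAlgebraic_pow F L).2 σ
  rw [AlgEquiv.coe_pow, coe_frobeniusAlgEquivOfAlgebraic, ← coe_frobeniusAlgHom]
  exact Function.IsFixedPt.iterate hx n

lemma frobeniusAlgHom_iterate_three [Finite L] (hL : finrank F L = 3) (x : L) :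
    Frob (Frob (Frob x)) = x := by
  have h := pow_orderOf_eq_one (frobeniusAlgHom F L)
  rw [orderOf_frobeniusAlgHom, hL] at h
  simpa [pow_succ] using DFunLike.congr_fun h x

lemma sig1_mem_range [Finite L] (hL : finrank F L = 3) (x : L) :
    sig1 F L x ∈ Set.range (algebraMap F L) := by
  refine mem_range_algebraMap_of_frobeniusAlgHom_eq ?_
  simp only [sig1, frk_one, frk_two, map_add, frobeniusAlgHom_iterate_three hL]
  ring

lemma sig2_mem_range [Finite L] (hL : finrank F L = 3) (x : L) :
    sig2 F L x ∈ Set.range (algebraMap F L) := by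
  refine mem_range_algebraMap_of_frobeniusAlgHom_eq ?_
  simp only [sig2, frk_one, frk_two, map_add, map_mul, frobeniusAlgHom_iterate_three hL]
  ring

lemma phiM_frk_one [Finite L] (hL : finrank F L = 3) (k : L) :
    phiM F L k (frk F L 1 k) = k ^ 2 := by
  simp only [phiM_eq, frk_one, frk_two, frobeniusAlgHom_iterate_three hL]
  ring

lemma phiM_frk_two [Finite L] (hL : finrank F L = 3) (k : L) :
    phiM F L k (frk F L 2 k) = k ^ 2 := by
  simp only [phiM_eq, frk_one, frk_two, frobeniusAlgHom_iterate_three hL]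
  ring

lemma frk_one_ne_frk_two [Finite L] {k : L} (hk : k ∉ Set.range (algebraMap F L)) :
    frk F L 1 k ≠ frk F L 2 k := by
  rw [frk_one, frk_two]
  exact fun h => hk (mem_range_algebraMap_of_frobeniusAlgHom_eq ((frobeniusAlgHom F L).injective h).symm)

end Frobenius

section Quadratic

variable {F L : Type*} [Field F] [Fintype F] [Field L] [Algebra F L] [Finite L]
  {l : L →ₗ[F] F} {k : L}

lemma map_phiM_add_algebraMap (hL : finrank F L = 3) (h1 : l 1 = 0) (hk : l k = 0)
    (m : L) (c : F) :
    l (phiM F L k (m + algebraMap F L c)) = l (phiM F L k m) + c * l m := by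
  obtain ⟨s, hs⟩ := sig1_mem_range hL m
  have : phiM F L k (m + algebraMap F L c)
      = phiM F L k m + c • ((2 : F) • k + m - (s + c) • 1) := by
    simp only [phiM_eq, frk_one, frk_two, sig1, map_add, AlgHom.commutes] at hs ⊢
    simp only [Algebra.smul_def, map_add, mul_one, map_ofNat]
    linear_combination algebraMap F L c * hs
  simp [this, h1, hk]

lemma map_phiM_smul_self (hL : finrank F L = 3) (h1 : l 1 = 0) (hk : l k = 0)
    (hk2 : l (k ^ 2) = 1) (y : F) :
    l (phiM F L k (y • k)) = -(y * (y + 1)) := by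
  obtain ⟨s₁, hs₁⟩ := sig1_mem_range hL k
  obtain ⟨s₂, hs₂⟩ := sig2_mem_range hL k
  have : phiM F L k (y • k)
      = (y * s₁ + y * y * s₁) • k - (y + y * y) • k ^ 2 - (y * y * s₂) • 1 := by
    simp only [phiM_eq, frk_one, frk_two, sig1, sig2, map_smul] at hs₁ hs₂ ⊢
    simp only [Algebra.smul_def, map_add, map_mul, mul_one]
    linear_combination
      -(algebraMap F L y + algebraMap F L y ^ 2) * k * hs₁ + algebraMap F L y ^ 2 * hs₂
  simp only [this, map_sub, map_smul, h1, hk, hk2, smul_eq_mul, mul_zero, mul_one]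
  ring

end Quadratic

section Coordinates

variable {F L : Type*} [Field F] [Field L] [Algebra F L]

lemma linearIndependent_one_self_sq (hL : finrank F L = 3) {k : L}
    (hk : k ∉ Set.range (algebraMap F L)) : LinearIndependent F ![1, k, k ^ 2] := by
  have : FiniteDimensional F L := Module.finite_of_finrank_eq_succ hL
  have hdeg : (minpoly F k).natDegree = 3 := by
    have hdvd : (minpoly F k).natDegree ∣ 3 := hL ▸ minpoly.degree_dvd (IsIntegral.of_finite F k)
    have hne : (minpoly F k).natDegree ≠ 1 := fun h => hk (minpoly.natDegree_eq_one_iff.mp h)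
    rcases (Nat.dvd_prime Nat.prime_three).mp hdvd with h | h
    · exact absurd h hne
    · exact h
  have h := linearIndependent_pow (K := F) k
  rw [hdeg] at h
  convert h using 1
  ext i
  fin_cases i <;> simp

noncomputable def basisOneSelfSq (hL : finrank F L = 3) {k : L}
    (hk : k ∉ Set.range (algebraMap F L)) : Basis (Fin 3) F L :=
  basisOfLinearIndependentOfCardEqFinrank (linearIndependent_one_self_sq hL hk) (by simp [hL])

variable (hL : finrank F L = 3) {k : L} (hk : k ∉ Set.range (algebraMap F L))

lemma coe_basisOneSelfSq : ⇑(basisOneSelfSq hL hk) = ![1, k, k ^ 2] :=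
  coe_basisOfLinearIndependentOfCardEqFinrank _ _

lemma basisOneSelfSq_coord_two_one : (basisOneSelfSq hL hk).coord 2 1 = 0 := by
  simpa [coe_basisOneSelfSq] using (basisOneSelfSq hL hk).repr_self_apply (i := 0) 2

lemma basisOneSelfSq_coord_two_self : (basisOneSelfSq hL hk).coord 2 k = 0 := by
  simpa [coe_basisOneSelfSq] using (basisOneSelfSq hL hk).repr_self_apply (i := 1) 2

lemma basisOneSelfSq_coord_two_sq : (basisOneSelfSq hL hk).coord 2 (k ^ 2) = 1 := by
  simpa [coe_basisOneSelfSq] using (basisOneSelfSq hL hk).repr_self_apply (i := 2) 2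

lemma linearIndependent_one_self_iff (v : L) :
    LinearIndependent F ![1, k, v] ↔ (basisOneSelfSq hL hk).coord 2 v ≠ 0 := by
  simpa [coe_basisOneSelfSq] using (basisOneSelfSq hL hk).linearIndependent_zero_one_iff v

lemma card_filter_coord_phiM_eq_zero [Fintype F] [Fintype L] [DecidableEq F] :
    #{m : L | (basisOneSelfSq hL hk).coord 2 (phiM F L k m) = 0}
      = Fintype.card F ^ 2 + Fintype.card F := by
  have h1 := basisOneSelfSq_coord_two_one hL hk
  have hk1 := basisOneSelfSq_coord_two_self hL hk
  have hk2 := basisOneSelfSq_coord_two_sq hL hk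
  set b := basisOneSelfSq hL hk
  let E : F × F × F ≃ L := ((Equiv.refl F).prodCongr (finTwoArrowEquiv F).symm).trans
    (Fin.consEquiv fun _ => F) |>.trans b.equivFun.symm.toEquiv
  have hE (v : F × F × F) : E v = v.1 • 1 + v.2.1 • k + v.2.2 • k ^ 2 := by
    simp [E, b, coe_basisOneSelfSq, Fin.sum_univ_three]
  let G (y z : F) : F := b.coord 2 (phiM F L k (y • k + z • k ^ 2))
  have hQ (v : F × F × F) : b.coord 2 (phiM F L k (E v)) = G v.2.1 v.2.2 + v.1 * v.2.2 := by
    rw [hE, ← Algebra.algebraMap_eq_smul_one, add_assoc, add_comm,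
      map_phiM_add_algebraMap hL h1 hk1, map_add, map_smul, map_smul, hk1, hk2,
      smul_eq_mul, smul_eq_mul, mul_zero, mul_one, zero_add]
  have hG (y : F) : G y 0 = -(y * (y + 1)) := by
    simpa [G] using map_phiM_smul_self hL h1 hk1 hk2 y
  rw [← card_equiv E (s := {v | G v.2.1 v.2.2 + v.1 * v.2.2 = 0})
    (fun v => by simp only [mem_filter, mem_univ, true_and, hQ]),
    card_filter_add_mul_snd_eq_zero]
  simp_rw [hG, card_filter_mul_add_one_eq_zero]
  have := Fintype.card_pos (α := F)
  zify [this]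
  ring

end Coordinates

section Fibers

variable {F L : Type*} [Field F] [Fintype F] [Field L] [Algebra F L]

lemma notMem_Sprime_of_mem_range {k : L} (hk : k ∈ Set.range (algebraMap F L)) (m : L) :
    (k, m) ∉ Sprime F L := by
  rintro ⟨hli, -⟩
  obtain ⟨c, rfl⟩ := hk
  refine Fintype.not_linearIndependent_iff.mpr ⟨![c, -1, 0], ?_, 1, by simp⟩ hli
  simp [Fin.sum_univ_three, Algebra.smul_def]

open scoped Classical in
lemma card_fiber_Sprime [Fintype L] (hL : finrank F L = 3) {k : L} (hk : k ∉ Set.range (algebraMap F L)) :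
    #{m | (k, m) ∈ Sprime F L}
      = Fintype.card F ^ 3 - Fintype.card F ^ 2 - Fintype.card F - 2 := by
  have hzero := card_filter_coord_phiM_eq_zero hL hk
  set l := (basisOneSelfSq hL hk).coord 2
  have hfiber : ({m | (k, m) ∈ Sprime F L} : Finset L)
      = ({m | l (phiM F L k m) ≠ 0} : Finset L) \ {frk F L 1 k, frk F L 2 k} := by
    ext m
    simp [Sprime, linearIndependent_one_self_iff hL hk, l]
  have hsub : {frk F L 1 k, frk F L 2 k} ⊆ ({m | l (phiM F L k m) ≠ 0} : Finset L) := by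
    simp only [insert_subset_iff, singleton_subset_iff, mem_filter, mem_univ, true_and,
      phiM_frk_one hL, phiM_frk_two hL, l, basisOneSelfSq_coord_two_sq]
    exact ⟨one_ne_zero, one_ne_zero⟩
  have hsplit := card_filter_add_card_filter_not (s := univ) fun m => l (phiM F L k m) = 0
  rw [card_univ, Module.card_eq_pow_finrank (K := F), hL, hzero] at hsplit
  simp only [← ne_eq] at hsplit
  rw [hfiber, card_sdiff_of_subset hsub, card_pair (frk_one_ne_frk_two hk)]
  omega

end Fibers

lemma card_filter_notMem_range_algebraMap {F L : Type*} [Field F] [Fintype F] [Field L]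
    [Algebra F L] [Fintype L] [DecidablePred (· ∈ Set.range (algebraMap F L))] :
    #{k : L | k ∉ Set.range (algebraMap F L)} = Fintype.card L - Fintype.card F := by
  have hrange : #{k : L | k ∈ Set.range (algebraMap F L)} = Fintype.card F := by
    classical
    rw [← card_univ, ← card_image_of_injective univ (algebraMap F L).injective]
    congr 1
    ext
    simp
  have := card_filter_add_card_filter_not (s := univ) (· ∈ Set.range (algebraMap F L))
  rw [hrange, card_univ] at this
  omega

lemma card_formula_eq_zero_iff {q : ℕ} (hq : 2 ≤ q) :
    (q ^ 3 - q) * (q ^ 3 - q ^ 2 - q - 2) = 0 ↔ q = 2 := by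
  refine ⟨fun h => ?_, fun h => by subst h; norm_num⟩
  by_contra hne
  have h3 : 3 ≤ q := by omega
  have hcube : q ^ 3 = q * q * q := by ring
  have hlt₁ : q < q ^ 3 := by nlinarith
  have hlt₂ : q ^ 2 + q + 2 < q ^ 3 := by nlinarith
  rcases Nat.mul_eq_zero.mp h with h | h <;> omega

/-- `|𝒮'| = (q³−q)(q³−q²−q−2)`; in particular `𝒮' = ∅` iff `q = 2`. -/
theorem card_Sprime (F : Type*) [Field F] [Fintype F]
    (L : Type*) [Field L] [Algebra F L] (hL : Module.finrank F L = 3)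
    (q : ℕ) (hq : q = Fintype.card F) :
    Nat.card (Sprime F L) = (q ^ 3 - q) * (q ^ 3 - q ^ 2 - q - 2) ∧
      (Sprime F L = ∅ ↔ q = 2) := by
  classical
  subst hq
  have : Module.Finite F L := Module.finite_of_finrank_eq_succ hL
  have : Fintype L := Module.fintypeOfFintype (Module.finBasis F L)
  have hfiber (k : L) : #{m | (k, m) ∈ Sprime F L} = if k ∈ Set.range (algebraMap F L) then 0
      else Fintype.card F ^ 3 - Fintype.card F ^ 2 - Fintype.card F - 2 := by
    split_ifs with hk
    · exact card_eq_zero.mpr (filter_false_of_mem fun m _ => notMem_Sprime_of_mem_range hk m)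
    · exact card_fiber_Sprime hL hk
  have hcard : Nat.card (Sprime F L) = (Fintype.card F ^ 3 - Fintype.card F)
      * (Fintype.card F ^ 3 - Fintype.card F ^ 2 - Fintype.card F - 2) := by
    rw [Nat.card_eq_fintype_card, Fintype.card_subtype, card_filter, Fintype.sum_prod_type]
    simp_rw [← card_filter, hfiber]
    rw [sum_ite, sum_const_zero, zero_add, sum_const, smul_eq_mul,
      card_filter_notMem_range_algebraMap, Module.card_eq_pow_finrank (K := F), hL]
  refine ⟨hcard, ?_⟩
  rw [← card_formula_eq_zero_iff Fintype.one_lt_card, ← hcard, Nat.card_coe_set_eq,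
    Set.ncard_eq_zero]
end

section
/- Let (I, C_f, Z) ∈ 𝒮, where C_f is the companion matrix of f = x³ − cx² − bx − a and Z has columns (0,0,1)ᵀ, (z₁,z₂,z₃)ᵀ, (z₁',z₂',z₃')ᵀ. Then the multiplication ∘ on 𝔽_q³ defined by x ∘ y := (x₁I + x₂C_f + x₃Z)·y is commutative if and only if (a,b,c) = (z₁,z₂,z₃). -/
open Matrix Polynomial

/-- The semifield multiplication `x ∘ y = (x₁·I + x₂·A + x₃·B)·y` attached to a
basis `(I, A, B)`. -/
def triMul (F : Type*) [Field F] (A B : Matrix (Fin 3) (Fin 3) F) (x y : Fin 3 → F) :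
    Fin 3 → F :=
  (x 0 • (1 : Matrix (Fin 3) (Fin 3) F) + x 1 • A + x 2 • B).mulVec y

/-- for `(I, C_f, Z) ∈ 𝒮` with `Z` having columns `(0,0,1)ᵀ`,
`(z₁,z₂,z₃)ᵀ`, `(z₁',z₂',z₃')ᵀ`, the semifield multiplication is commutative iff
`(a,b,c) = (z₁,z₂,z₃)`. -/
theorem semifield_commutative_iff (F : Type*) [Field F] [Fintype F]
    (a b c z1 z2 z3 z1' z2' z3' : F)
    (hf : Irreducible (cubic F a b c))
    (Z : Matrix (Fin 3) (Fin 3) F)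
    (hZ : Z = !![0, z1, z1'; 0, z2, z2'; 1, z3, z3'])
    (hmrd : IsMRD F (Submodule.span F {(1 : Matrix (Fin 3) (Fin 3) F), cMat F a b c, Z})) :
    (∀ x y : Fin 3 → F, triMul F (cMat F a b c) Z x y = triMul F (cMat F a b c) Z y x) ↔
      (a = z1 ∧ b = z2 ∧ c = z3) := by
  subst hZ
  constructor
  · intro h
    have h1 := h ![0, 1, 0] ![0, 0, 1]
    have h0 := congrFun h1 0
    have h2 := congrFun h1 1
    have h3 := congrFun h1 2
    simp [triMul, cMat, Matrix.mulVec, dotProduct, Fin.sum_univ_three,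
      Matrix.one_apply] at h0 h2 h3
    exact ⟨h0, h2, h3⟩
  · rintro ⟨rfl, rfl, rfl⟩
    intro x y
    funext i
    fin_cases i <;>
      simp [triMul, cMat, Matrix.mulVec, dotProduct, Fin.sum_univ_three,
        Matrix.one_apply] <;> ring
end

section
/- Let (I, C_f, Z) ∈ 𝒮, where C_f is the companion matrix of the monic irreducible cubic f. Then the multiplication ∘ on 𝔽_q³ defined by x ∘ y := (x₁I + x₂C_f + x₃Z)·y is associative if and only if Z = C_f²; in that case (𝔽_q³, +, ∘) is isomorphic to the field 𝔽_{q³}. -/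
open Matrix Polynomial

/-!
Send `x ∈ F³` to `x₀ + x₁ r + x₂ r²` in `F[X]/(f)`, `r` the class of `X`. In the basis
`1, r, r²` multiplication by `r` has matrix `C_f`, so for `Z = C_f²` the product `x ∘ y`
becomes the product of `F[X]/(f)`: it is associative, and for irreducible `f` it is that of a
field with `q³` elements. Conversely `e₁ ∘ e₁ = C_f e₁ = e₂`, so associativity applied to
`(e₁ ∘ e₁) ∘ z = e₁ ∘ (e₁ ∘ z)` reads `Z z = C_f² z`.
-/

section Semifield

variable {F : Type*} [Field F]

lemma triMul_single_one {A B : Matrix (Fin 3) (Fin 3) F} (y : Fin 3 → F) :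
    triMul F A B (Pi.single 1 1) y = A *ᵥ y := by
  simp [triMul]

lemma triMul_single_two {A B : Matrix (Fin 3) (Fin 3) F} (y : Fin 3 → F) :
    triMul F A B (Pi.single 2 1) y = B *ᵥ y := by
  simp [triMul]

lemma eq_sq_of_triMul_assoc {A B : Matrix (Fin 3) (Fin 3) F}
    (hA : A *ᵥ Pi.single 1 1 = Pi.single 2 1)
    (h : ∀ x y z, triMul F A B (triMul F A B x y) z = triMul F A B x (triMul F A B y z)) :
    B = A ^ 2 := by
  refine ext_iff_mulVec.2 fun z => ?_
  simpa [triMul_single_one, triMul_single_two, hA, pow_two, mulVec_mulVec] using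
    h (Pi.single 1 1) (Pi.single 1 1) z

variable (a b c : F)

lemma cMat_mulVec_single_zero : cMat F a b c *ᵥ Pi.single 0 1 = Pi.single 1 1 := by
  ext i; fin_cases i <;> simp [cMat]

lemma cMat_mulVec_single_one : cMat F a b c *ᵥ Pi.single 1 1 = Pi.single 2 1 := by
  ext i; fin_cases i <;> simp [cMat]

lemma cMat_mulVec (v : Fin 3 → F) :
    cMat F a b c *ᵥ v = ![a * v 2, v 0 + b * v 2, v 1 + c * v 2] := by
  ext i; fin_cases i <;> simp [cMat, vecHead, vecTail]

lemma triMul_cMat_sq_single_zero (x : Fin 3 → F) :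
    triMul F (cMat F a b c) (cMat F a b c ^ 2) x (Pi.single 0 1) = x := by
  simp only [triMul, add_mulVec, smul_mulVec, one_mulVec, pow_two, ← mulVec_mulVec,
    cMat_mulVec_single_zero, cMat_mulVec_single_one]
  ext i; fin_cases i <;> simp

variable {L : Type*} [CommRing L] [Algebra F L]

lemma map_triMul_cMat_sq (θ : (Fin 3 → F) →ₗ[F] L) (r : L)
    (hθ : θ (Pi.single 0 1) = 1) (hθr : ∀ v, θ (cMat F a b c *ᵥ v) = r * θ v)
    (x y : Fin 3 → F) :
    θ (triMul F (cMat F a b c) (cMat F a b c ^ 2) x y) = θ x * θ y := by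
  have hmul : ∀ y, θ (triMul F (cMat F a b c) (cMat F a b c ^ 2) x y) =
      (x 0 • 1 + x 1 • r + x 2 • r ^ 2) * θ y := by
    intro y
    simp only [triMul, add_mulVec, smul_mulVec, one_mulVec, pow_two, ← mulVec_mulVec, map_add,
      map_smul, hθr, add_mul, smul_mul_assoc, one_mul, mul_assoc]
  calc θ (triMul F (cMat F a b c) (cMat F a b c ^ 2) x y)
      = (x 0 • 1 + x 1 • r + x 2 • r ^ 2) * θ y := hmul y
    _ = θ (triMul F (cMat F a b c) (cMat F a b c ^ 2) x (Pi.single 0 1)) * θ y := by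
      rw [hmul, hθ, mul_one]
    _ = θ x * θ y := by rw [triMul_cMat_sq_single_zero]

lemma pow_three_eq_of_aeval_cubic {r : L}
    (h : aeval r (cubic F a b c) = 0) :
    r ^ 3 = algebraMap F L c * r ^ 2 + algebraMap F L b * r + algebraMap F L a := by
  simp only [cubic, map_sub, map_mul, map_pow, aeval_X, aeval_C] at h
  linear_combination h

lemma cubic_monic : (cubic F a b c).Monic := by
  unfold cubic; monicity!

lemma cubic_natDegree : (cubic F a b c).natDegree = 3 := by
  unfold cubic; compute_degree!

noncomputable def cubicBasis : Module.Basis (Fin 3) F (AdjoinRoot (cubic F a b c)) :=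
  (AdjoinRoot.powerBasis' (cubic_monic a b c)).basis.reindex (finCongr (cubic_natDegree a b c))

lemma cubicBasis_apply (i : Fin 3) :
    cubicBasis a b c i = AdjoinRoot.root (cubic F a b c) ^ (i : ℕ) := by
  simp only [cubicBasis, Module.Basis.coe_reindex, PowerBasis.coe_basis,
    AdjoinRoot.powerBasis'_gen, Function.comp_apply]
  rfl

lemma cubicBasis_equivFun_symm_apply (v : Fin 3 → F) :
    (cubicBasis a b c).equivFun.symm v =
      algebraMap F _ (v 0) + algebraMap F _ (v 1) * AdjoinRoot.root (cubic F a b c) +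
        algebraMap F _ (v 2) * AdjoinRoot.root (cubic F a b c) ^ 2 := by
  simp [Fin.sum_univ_three, cubicBasis_apply, Algebra.smul_def]

lemma cubicBasis_equivFun_symm_cMat_mulVec (v : Fin 3 → F) :
    (cubicBasis a b c).equivFun.symm (cMat F a b c *ᵥ v) =
      AdjoinRoot.root (cubic F a b c) * (cubicBasis a b c).equivFun.symm v := by
  rw [cMat_mulVec, cubicBasis_equivFun_symm_apply, cubicBasis_equivFun_symm_apply]
  simp only [cons_val_zero, cons_val_one, cons_val_two, head_cons, tail_cons, map_add, map_mul]
  have hr := pow_three_eq_of_aeval_cubic a b c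
    (by rw [AdjoinRoot.aeval_eq, AdjoinRoot.mk_self] : aeval (AdjoinRoot.root _) _ = 0)
  linear_combination -algebraMap F _ (v 2) * hr

lemma cubicBasis_equivFun_symm_triMul (x y : Fin 3 → F) :
    (cubicBasis a b c).equivFun.symm (triMul F (cMat F a b c) (cMat F a b c ^ 2) x y) =
      (cubicBasis a b c).equivFun.symm x * (cubicBasis a b c).equivFun.symm y :=
  map_triMul_cMat_sq a b c (cubicBasis a b c).equivFun.symm.toLinearMap _
    (by simp [cubicBasis_apply]) (cubicBasis_equivFun_symm_cMat_mulVec a b c) x y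

lemma triMul_cMat_sq_assoc (x y z : Fin 3 → F) :
    triMul F (cMat F a b c) (cMat F a b c ^ 2) (triMul F (cMat F a b c) (cMat F a b c ^ 2) x y) z =
      triMul F (cMat F a b c) (cMat F a b c ^ 2) x
        (triMul F (cMat F a b c) (cMat F a b c ^ 2) y z) := by
  apply (cubicBasis a b c).equivFun.symm.injective
  simp only [cubicBasis_equivFun_symm_triMul, mul_assoc]

theorem exists_equiv_triMul_cMat_sq [Fintype F] (hf : Irreducible (cubic F a b c))
    (K : Type*) [Field K] [Fintype K] (hK : Fintype.card K = Fintype.card F ^ 3) :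
    ∃ e : (Fin 3 → F) ≃ K, (∀ x y, e (x + y) = e x + e y) ∧
      ∀ x y, e (triMul F (cMat F a b c) (cMat F a b c ^ 2) x y) = e x * e y := by
  have : Fact (Irreducible (cubic F a b c)) := ⟨hf⟩
  let _ := Module.fintypeOfFintype (cubicBasis a b c)
  let ψ := FiniteField.ringEquivOfCardEq (K := AdjoinRoot (cubic F a b c)) (K' := K)
    (by rw [Module.card_fintype (cubicBasis a b c), Fintype.card_fin, hK])
  refine ⟨(cubicBasis a b c).equivFun.symm.toEquiv.trans ψ.toEquiv, fun x y => ?_,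
    fun x y => ?_⟩
  · simp only [Equiv.trans_apply, LinearEquiv.coe_toEquiv, RingEquiv.toEquiv_eq_coe,
      EquivLike.coe_coe, map_add]
  · simp only [Equiv.trans_apply, LinearEquiv.coe_toEquiv, RingEquiv.toEquiv_eq_coe,
      EquivLike.coe_coe, cubicBasis_equivFun_symm_triMul, map_mul]

end Semifield

theorem semifield_associative_iff_general (F : Type*) [Field F] [Fintype F]
    (a b c : F) (hf : Irreducible (cubic F a b c))
    (Z : Matrix (Fin 3) (Fin 3) F) :
    ((∀ x y z : Fin 3 → F,
        triMul F (cMat F a b c) Z (triMul F (cMat F a b c) Z x y) z =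
          triMul F (cMat F a b c) Z x (triMul F (cMat F a b c) Z y z)) ↔
      Z = cMat F a b c ^ 2) ∧
    (Z = cMat F a b c ^ 2 →
      ∀ (K : Type) [Field K] [Fintype K], Fintype.card K = Fintype.card F ^ 3 →
        ∃ e : (Fin 3 → F) ≃ K, (∀ x y : Fin 3 → F, e (x + y) = e x + e y) ∧
          ∀ x y : Fin 3 → F, e (triMul F (cMat F a b c) Z x y) = e x * e y) := by
  refine ⟨⟨eq_sq_of_triMul_assoc (cMat_mulVec_single_one a b c), ?_⟩, ?_⟩
  · rintro rfl
    exact triMul_cMat_sq_assoc a b c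
  · rintro rfl K _ _ hK
    exact exists_equiv_triMul_cMat_sq a b c hf K hK

/-- for `(I, C_f, Z) ∈ 𝒮`, the semifield multiplication is associative
iff `Z = C_f²`, in which case `(F³, +, ∘)` is isomorphic to the field with `q³`
elements. -/
theorem semifield_associative_iff (F : Type*) [Field F] [Fintype F]
    (a b c : F) (hf : Irreducible (cubic F a b c))
    (Z : Matrix (Fin 3) (Fin 3) F)
    (hZ0 : Z 0 0 = 0) (hZ1 : Z 1 0 = 0) (hZ2 : Z 2 0 = 1)
    (hmrd : IsMRD F (Submodule.span F {(1 : Matrix (Fin 3) (Fin 3) F), cMat F a b c, Z})) :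
    ((∀ x y z : Fin 3 → F,
        triMul F (cMat F a b c) Z (triMul F (cMat F a b c) Z x y) z =
          triMul F (cMat F a b c) Z x (triMul F (cMat F a b c) Z y z)) ↔
      Z = cMat F a b c ^ 2) ∧
    (Z = cMat F a b c ^ 2 →
      ∀ (K : Type) [Field K] [Fintype K], Fintype.card K = Fintype.card F ^ 3 →
        ∃ e : (Fin 3 → F) ≃ K, (∀ x y : Fin 3 → F, e (x + y) = e x + e y) ∧
          ∀ x y : Fin 3 → F, e (triMul F (cMat F a b c) Z x y) = e x * e y) :=
  semifield_associative_iff_general F a b c hf Z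
end

section
/- Let (I, C_f, Z) ∈ 𝒮, where C_f is the companion matrix of f = x³ − cx² − bx − a and Z has columns (0,0,1)ᵀ, (z₁,z₂,z₃)ᵀ, (z₁',z₂',z₃')ᵀ. Set g = x³ − z₃x² − z₂x − z₁ with companion matrix C_g, and let Ẑ be the 3×3 matrix with columns (0,0,1)ᵀ, (a,b,c)ᵀ, (z₁',z₂',z₃')ᵀ. Then: (i) for every x = (x₁,x₂,x₃)ᵀ one has x₁I + x₂C_f + x₃Z = (x | C_g x | Ẑ x), the matrix whose columns are x, C_g x, Ẑ x; (ii) the 𝔽_q-span of {I, C_g, Ẑ} is a [3×3;3]-MRD code, so (I, C_g, Ẑ) ∈ 𝒮; and (iii) g is irreducible over 𝔽_q. -/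
open Matrix Polynomial

/-- the dual triple: for `(I, C_f, Z) ∈ 𝒮` with
`Z = (e₃ | (z₁,z₂,z₃)ᵀ | (z₁',z₂',z₃')ᵀ)`, setting `g = x³ − z₃x² − z₂x − z₁` with
companion matrix `C_g` and `Ẑ = (e₃ | (a,b,c)ᵀ | (z₁',z₂',z₃')ᵀ)`: (i)
`x₁I + x₂C_f + x₃Z = (x | C_g x | Ẑ x)` for all `x`; (ii) the span of `{I, C_g, Ẑ}` is
a `[3×3;3]`-MRD code, so `(I, C_g, Ẑ) ∈ 𝒮`; (iii) `g` is irreducible over `F`. -/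
theorem dual_triple (F : Type*) [Field F] [Fintype F]
    (a b c z1 z2 z3 z1' z2' z3' : F)
    (hf : Irreducible (cubic F a b c))
    (hmrd : IsMRD F (Submodule.span F {(1 : Matrix (Fin 3) (Fin 3) F), cMat F a b c,
      !![0, z1, z1'; 0, z2, z2'; 1, z3, z3']})) :
    (∀ x : Fin 3 → F,
      x 0 • (1 : Matrix (Fin 3) (Fin 3) F) + x 1 • cMat F a b c +
          x 2 • !![0, z1, z1'; 0, z2, z2'; 1, z3, z3'] =
        Matrix.of fun i j =>
          ![x, (cMat F z1 z2 z3).mulVec x,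
            (!![0, a, z1'; 0, b, z2'; 1, c, z3'] : Matrix (Fin 3) (Fin 3) F).mulVec x] j i) ∧
    IsMRD F (Submodule.span F {(1 : Matrix (Fin 3) (Fin 3) F), cMat F z1 z2 z3,
      !![0, a, z1'; 0, b, z2'; 1, c, z3']}) ∧
    ((1 : Matrix (Fin 3) (Fin 3) F), cMat F z1 z2 z3,
      (!![0, a, z1'; 0, b, z2'; 1, c, z3'] : Matrix (Fin 3) (Fin 3) F)) ∈ mrdS F ∧
    Irreducible (cubic F z1 z2 z3) := by
  obtain ⟨hrank, hinv⟩ := hmrd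
  set Z : Matrix (Fin 3) (Fin 3) F := !![0, z1, z1'; 0, z2, z2'; 1, z3, z3'] with hZdef
  set Zh : Matrix (Fin 3) (Fin 3) F := !![0, a, z1'; 0, b, z2'; 1, c, z3'] with hZhdef
  -- part (i)
  have parti : ∀ x : Fin 3 → F,
      x 0 • (1 : Matrix (Fin 3) (Fin 3) F) + x 1 • cMat F a b c + x 2 • Z =
        Matrix.of fun i j =>
          ![x, (cMat F z1 z2 z3).mulVec x, Zh.mulVec x] j i := by
    intro x
    ext i j
    fin_cases i <;> fin_cases j <;>
      simp [Z, Zh, cMat, Matrix.mulVec, dotProduct, Fin.sum_univ_three, Matrix.one_apply] <;>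
      ring
  -- key duality identity
  have key : ∀ x y : Fin 3 → F,
      (x 0 • (1 : Matrix (Fin 3) (Fin 3) F) + x 1 • cMat F a b c + x 2 • Z).mulVec y =
      (y 0 • (1 : Matrix (Fin 3) (Fin 3) F) + y 1 • cMat F z1 z2 z3 + y 2 • Zh).mulVec x := by
    intro x y
    ext i
    fin_cases i <;>
      simp [Z, Zh, cMat, Matrix.mulVec, dotProduct, Fin.sum_univ_three, Matrix.one_apply] <;>
      ring
  -- combinations lie in the original span
  have memM : ∀ x : Fin 3 → F,
      x 0 • (1 : Matrix (Fin 3) (Fin 3) F) + x 1 • cMat F a b c + x 2 • Z ∈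
        Submodule.span F {(1 : Matrix (Fin 3) (Fin 3) F), cMat F a b c, Z} := by
    intro x
    refine Submodule.add_mem _ (Submodule.add_mem _ ?_ ?_) ?_ <;>
      exact Submodule.smul_mem _ _ (Submodule.subset_span (by simp))
  -- M x = 0 → x = 0
  have Mzero : ∀ x : Fin 3 → F,
      x 0 • (1 : Matrix (Fin 3) (Fin 3) F) + x 1 • cMat F a b c + x 2 • Z = 0 → x = 0 := by
    intro x hx
    funext i
    have h := congrFun (congrFun ((parti x).symm.trans hx) i) 0
    simpa using h
  have Munit : ∀ x : Fin 3 → F, x ≠ 0 →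
      IsUnit (x 0 • (1 : Matrix (Fin 3) (Fin 3) F) + x 1 • cMat F a b c + x 2 • Z) := by
    intro x hx
    exact hinv _ (memM x) (fun h => hx (Mzero x h))
  -- N y = 0 → y = 0
  have Nzero : ∀ y : Fin 3 → F,
      y 0 • (1 : Matrix (Fin 3) (Fin 3) F) + y 1 • cMat F z1 z2 z3 + y 2 • Zh = 0 → y = 0 := by
    intro y hy
    funext i
    have h := congrFun (congrFun hy i) 0
    fin_cases i <;> simpa [Zh, cMat, Matrix.one_apply] using h
  -- N y is a unit for y ≠ 0
  have Nunit : ∀ y : Fin 3 → F, y ≠ 0 →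
      IsUnit (y 0 • (1 : Matrix (Fin 3) (Fin 3) F) + y 1 • cMat F z1 z2 z3 + y 2 • Zh) := by
    intro y hy
    rw [Matrix.isUnit_iff_isUnit_det, isUnit_iff_ne_zero]
    intro hdet
    obtain ⟨v, hv, hNv⟩ := (Matrix.exists_mulVec_eq_zero_iff).mpr hdet
    have hMy : (v 0 • (1 : Matrix (Fin 3) (Fin 3) F) + v 1 • cMat F a b c + v 2 • Z).mulVec y
        = 0 := by rw [key v y]; exact hNv
    have hinj := Matrix.mulVec_injective_iff_isUnit.mpr (Munit v hv)
    apply hy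
    have : (v 0 • (1 : Matrix (Fin 3) (Fin 3) F) + v 1 • cMat F a b c + v 2 • Z).mulVec y =
        (v 0 • (1 : Matrix (Fin 3) (Fin 3) F) + v 1 • cMat F a b c + v 2 • Z).mulVec 0 := by
      simpa using hMy
    exact hinj this
  -- linear independence of the new generators
  have li : LinearIndependent F
      ![(1 : Matrix (Fin 3) (Fin 3) F), cMat F z1 z2 z3, Zh] := by
    rw [Fintype.linearIndependent_iff]
    intro g hg i
    have hsum : g 0 • (1 : Matrix (Fin 3) (Fin 3) F) + g 1 • cMat F z1 z2 z3 + g 2 • Zh = 0 := by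
      simpa [Fin.sum_univ_three] using hg
    have := Nzero g hsum
    rw [this]; rfl
  have hrange : Set.range ![(1 : Matrix (Fin 3) (Fin 3) F), cMat F z1 z2 z3, Zh] =
      {(1 : Matrix (Fin 3) (Fin 3) F), cMat F z1 z2 z3, Zh} := by
    ext M
    simp [Matrix.range_cons, Matrix.range_cons_empty]
    tauto
  have hrank' : Module.finrank F
      (Submodule.span F {(1 : Matrix (Fin 3) (Fin 3) F), cMat F z1 z2 z3, Zh}) = 3 := by
    rw [← hrange, finrank_span_eq_card li, Fintype.card_fin]
  -- the new span is MRD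
  have hmrd' : IsMRD F
      (Submodule.span F {(1 : Matrix (Fin 3) (Fin 3) F), cMat F z1 z2 z3, Zh}) := by
    refine ⟨hrank', ?_⟩
    intro M hM hM0
    have : ∃ y : Fin 3 → F,
        M = y 0 • (1 : Matrix (Fin 3) (Fin 3) F) + y 1 • cMat F z1 z2 z3 + y 2 • Zh := by
      have hM' : M ∈ Submodule.span F
          (Set.range ![(1 : Matrix (Fin 3) (Fin 3) F), cMat F z1 z2 z3, Zh]) := by
        rwa [hrange]
      rw [Submodule.mem_span_range_iff_exists_fun] at hM'
      obtain ⟨y, hy⟩ := hM'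
      exact ⟨y, by rw [← hy]; simp [Fin.sum_univ_three]⟩
    obtain ⟨y, rfl⟩ := this
    refine Nunit y (fun h => hM0 ?_)
    rw [h]; simp
  -- irreducibility of g
  have gdeg : (cubic F z1 z2 z3).natDegree = 3 := by
    unfold cubic; compute_degree!
  have gne : cubic F z1 z2 z3 ≠ 0 := fun h => by simp [h] at gdeg
  have girr : Irreducible (cubic F z1 z2 z3) := by
    rw [Polynomial.irreducible_iff_roots_eq_zero_of_degree_le_three (by omega) (by omega)]
    rw [Multiset.eq_zero_iff_forall_notMem]
    intro t ht
    rw [Polynomial.mem_roots gne, Polynomial.IsRoot] at ht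
    have heval : t ^ 3 - z3 * t ^ 2 - z2 * t - z1 = 0 := by
      simpa [cubic] using ht
    have hyne : (![-t, 1, 0] : Fin 3 → F) ≠ 0 := by
      intro h
      have := congrFun h 1
      simp at this
    have hu := Nunit ![-t, 1, 0] hyne
    rw [Matrix.isUnit_iff_isUnit_det, isUnit_iff_ne_zero] at hu
    apply hu
    have : ((-t) • (1 : Matrix (Fin 3) (Fin 3) F) + (1:F) • cMat F z1 z2 z3 +
        (0:F) • Zh).det = -(t ^ 3 - z3 * t ^ 2 - z2 * t - z1) := by
      simp [cMat, Matrix.det_fin_three, Matrix.one_apply]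
      ring
    simpa [heval] using this
  refine ⟨parti, hmrd', ?_, girr⟩
  exact ⟨rfl, ⟨z1, z2, z3, girr, rfl⟩, by simp [Zh], by simp [Zh], by simp [Zh], hmrd'⟩
end

section
/- Let k, k̂ ∈ L be such that 1, k, φ(k,k̂) are linearly independent over 𝔽_q, so that (I, Σ₁(k,k̂), Σ₂(k,k̂)) ∈ 𝒮, and let ∘ be the multiplication on 𝔽_q³ defined by x ∘ y := (x₁I + x₂Σ₁(k,k̂) + x₃Σ₂(k,k̂))·y. Then: (a) ∘ is commutative if and only if k̂ ∈ {k, k^[1], k^[2]}, and if the characteristic of 𝔽_q is 2 then the case k̂ = k cannot occur (for char 2 and k̂ = k the elements 1, k, φ(k,k) are linearly dependent); moreover, for k̂ ∈ {k^[1], k^[2]} one has Σ₂(k,k̂) = Σ₁(k,k̂)². (b) ∘ is associative if and only if k̂ ∈ {k^[1], k^[2]}. -/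
open Matrix Polynomial

-- ===== auxiliary lemmas =====

section AuxA
variable (F : Type*) [Field F] [Fintype F] (L : Type*) [Field L] [Algebra F L]

lemma aux_fixed_mem_range [Fintype L] (x : L) (hx : x ^ (Fintype.card F) = x) :
    ∃ c : F, algebraMap F L c = x := by
  classical
  by_contra h
  push_neg at h
  have hq : 1 < Fintype.card F := Fintype.one_lt_card
  set P : Polynomial L := Polynomial.X ^ (Fintype.card F) - Polynomial.X with hPdef
  have hPne : P ≠ 0 := FiniteField.X_pow_card_sub_X_ne_zero L hq
  set T : Finset L := insert x (Finset.univ.image (algebraMap F L)) with hT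
  have hroots : T.val ⊆ P.roots := by
    intro y hy
    rw [Finset.mem_val, hT, Finset.mem_insert] at hy
    rw [Polynomial.mem_roots hPne]
    have hy2 : y ^ (Fintype.card F) = y := by
      rcases hy with rfl | hy
      · exact hx
      · obtain ⟨a, -, rfl⟩ := Finset.mem_image.1 hy
        rw [← map_pow, FiniteField.pow_card]
    simp [hPdef, Polynomial.IsRoot, sub_eq_zero, hy2]
  have hcard : T.card = Fintype.card F + 1 := by
    rw [hT, Finset.card_insert_of_notMem (by
      simp only [Finset.mem_image, Finset.mem_univ, true_and]
      rintro ⟨a, ha⟩; exact h a ha)]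
    rw [Finset.card_image_of_injective _ (algebraMap F L).injective, Finset.card_univ]
  have := Polynomial.card_le_degree_of_subset_roots hroots
  rw [hcard, hPdef, FiniteField.X_pow_card_sub_X_natDegree_eq L hq] at this
  omega

lemma aux_fmul (x y : L) : frk F L 1 (x * y) = frk F L 1 x * frk F L 1 y := by
  simp [frk, mul_pow]

lemma aux_fadd (x y : L) : frk F L 1 (x + y) = frk F L 1 x + frk F L 1 y := by
  obtain ⟨p, hp⟩ := CharP.exists F
  haveI := hp
  haveI hpp : Fact p.Prime := ⟨CharP.char_is_prime F p⟩
  haveI : CharP L p := charP_of_injective_algebraMap (algebraMap F L).injective p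
  obtain ⟨n, hFp, hn⟩ := FiniteField.card F p
  simp only [frk, pow_one, hn]
  exact add_pow_char_pow (p := p) (n := n) x y

lemma aux_ftwo (x : L) : frk F L 2 x = frk F L 1 (frk F L 1 x) := by
  simp [frk, ← pow_mul, pow_one, pow_two]

variable {F L} in
lemma aux_fcyc (hq3 : ∀ x : L, x ^ (Fintype.card F ^ 3) = x) (x : L) :
    frk F L 1 (frk F L 1 (frk F L 1 x)) = x := by
  simp only [frk, pow_one, ← pow_mul]
  rw [show Fintype.card F * Fintype.card F * Fintype.card F = Fintype.card F ^ 3 by ring]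
  exact hq3 x

end AuxA

section AuxSig
set_option linter.unusedSectionVars false
variable {F : Type*} [Field F] [Fintype F] {L : Type*} [Field L] [Algebra F L]
variable (hq3 : ∀ x : L, x ^ (Fintype.card F ^ 3) = x) (k : L)
include hq3

lemma sig1_frk1 : sig1 F L (frk F L 1 k) = sig1 F L k := by
  simp only [sig1, aux_ftwo, aux_fmul, aux_fadd, aux_fcyc hq3]; ring

lemma sig2_frk1 : sig2 F L (frk F L 1 k) = sig2 F L k := by
  simp only [sig2, aux_ftwo, aux_fmul, aux_fadd, aux_fcyc hq3]; ring

lemma sig3_frk1 : sig3 F L (frk F L 1 k) = sig3 F L k := by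
  simp only [sig3, aux_ftwo, aux_fmul, aux_fadd, aux_fcyc hq3]; ring

lemma sig1_frk2 : sig1 F L (frk F L 2 k) = sig1 F L k := by
  simp only [sig1, aux_ftwo, aux_fmul, aux_fadd, aux_fcyc hq3]; ring

lemma sig2_frk2 : sig2 F L (frk F L 2 k) = sig2 F L k := by
  simp only [sig2, aux_ftwo, aux_fmul, aux_fadd, aux_fcyc hq3]; ring

lemma sig3_frk2 : sig3 F L (frk F L 2 k) = sig3 F L k := by
  simp only [sig3, aux_ftwo, aux_fmul, aux_fadd, aux_fcyc hq3]; ring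

lemma sig1_mulf1 : sig1 F L (k * frk F L 1 k) = sig2 F L k := by
  simp only [sig1, sig2, aux_ftwo, aux_fmul, aux_fadd, aux_fcyc hq3]; ring

lemma sig2_mulf1 : sig2 F L (k * frk F L 1 k) = sig1 F L k * sig3 F L k := by
  simp only [sig1, sig2, sig3, aux_ftwo, aux_fmul, aux_fadd, aux_fcyc hq3]; ring

lemma sig3_mulf1 : sig3 F L (k * frk F L 1 k) = sig3 F L k ^ 2 := by
  simp only [sig3, aux_ftwo, aux_fmul, aux_fadd, aux_fcyc hq3]; ring

lemma sig3_addf1 : sig3 F L (k + frk F L 1 k) = sig1 F L k * sig2 F L k - sig3 F L k := by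
  simp only [sig1, sig2, sig3, aux_ftwo, aux_fmul, aux_fadd, aux_fcyc hq3]; ring

lemma sig1_mulf2 : sig1 F L (k * frk F L 2 k) = sig2 F L k := by
  simp only [sig1, sig2, aux_ftwo, aux_fmul, aux_fadd, aux_fcyc hq3]; ring

lemma sig2_mulf2 : sig2 F L (k * frk F L 2 k) = sig1 F L k * sig3 F L k := by
  simp only [sig1, sig2, sig3, aux_ftwo, aux_fmul, aux_fadd, aux_fcyc hq3]; ring

lemma sig3_mulf2 : sig3 F L (k * frk F L 2 k) = sig3 F L k ^ 2 := by
  simp only [sig3, aux_ftwo, aux_fmul, aux_fadd, aux_fcyc hq3]; ring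

lemma sig3_addf2 : sig3 F L (k + frk F L 2 k) = sig1 F L k * sig2 F L k - sig3 F L k := by
  simp only [sig1, sig2, sig3, aux_ftwo, aux_fmul, aux_fadd, aux_fcyc hq3]; ring

lemma sig1_fixed : frk F L 1 (sig1 F L k) = sig1 F L k := by
  simp only [sig1, aux_ftwo, aux_fmul, aux_fadd, aux_fcyc hq3]; ring

lemma sig2_fixed : frk F L 1 (sig2 F L k) = sig2 F L k := by
  simp only [sig2, aux_ftwo, aux_fmul, aux_fadd, aux_fcyc hq3]; ring

lemma sig3_fixed : frk F L 1 (sig3 F L k) = sig3 F L k := by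
  simp only [sig3, aux_ftwo, aux_fmul, aux_fadd, aux_fcyc hq3]; ring

lemma aux_conj {k khat : L}
    (h1 : sig1 F L khat = sig1 F L k) (h2 : sig2 F L khat = sig2 F L k)
    (h3 : sig3 F L khat = sig3 F L k) :
    khat = k ∨ khat = frk F L 1 k ∨ khat = frk F L 2 k := by
  have key : (khat - k) * (khat - frk F L 1 k) * (khat - frk F L 2 k) = 0 := by
    have e : (khat - k) * (khat - frk F L 1 k) * (khat - frk F L 2 k)
        = khat ^ 3 - sig1 F L k * khat ^ 2 + sig2 F L k * khat - sig3 F L k := by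
      simp only [sig1, sig2, sig3]; ring
    rw [e, ← h1, ← h2, ← h3]
    simp only [sig1, sig2, sig3]; ring
  rcases mul_eq_zero.1 key with h | h
  · rcases mul_eq_zero.1 h with h | h
    · exact Or.inl (sub_eq_zero.1 h)
    · exact Or.inr (Or.inl (sub_eq_zero.1 h))
  · exact Or.inr (Or.inr (sub_eq_zero.1 h))

lemma Sig1_sq' (khat : L) : (Sig1 F L k khat) ^ 2 =
    !![0, sig3 F L k, sig1 F L k * sig3 F L k;
       0, -(sig2 F L k), sig3 F L k - sig1 F L k * sig2 F L k;
       1, sig1 F L k, sig1 F L k * sig1 F L k - sig2 F L k] := by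
  rw [pow_two, Sig1]
  ext i j
  fin_cases i <;> fin_cases j <;>
    simp [Matrix.mul_apply, Fin.sum_univ_three] <;> ring

lemma Sig2_eq_sq {khat : L} (h : khat = frk F L 1 k ∨ khat = frk F L 2 k) :
    Sig2 F L k khat = Sig1 F L k khat ^ 2 := by
  rw [Sig1_sq' hq3, Sig2]
  rcases h with rfl | rfl
  · rw [sig1_frk1 hq3, sig2_frk1 hq3, sig3_frk1 hq3, sig1_mulf1 hq3, sig3_addf1 hq3,
      sig2_mulf1 hq3]
    ext i j
    fin_cases i <;> fin_cases j <;> simp <;> ring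
  · rw [sig1_frk2 hq3, sig2_frk2 hq3, sig3_frk2 hq3, sig1_mulf2 hq3, sig3_addf2 hq3,
      sig2_mulf2 hq3]
    ext i j
    fin_cases i <;> fin_cases j <;> simp <;> ring

end AuxSig

section AuxTri
variable {F : Type*} [Field F]

lemma aux_comm_of (a b c d e g : F) (x y : Fin 3 → F) :
    triMul F !![0,0,a;1,0,b;0,1,c] !![0,a,d;0,b,e;1,c,g] x y
      = triMul F !![0,0,a;1,0,b;0,1,c] !![0,a,d;0,b,e;1,c,g] y x := by
  funext i
  fin_cases i <;>
    simp [triMul, Matrix.mulVec, dotProduct, Fin.sum_univ_three, Matrix.one_apply] <;>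
    ring

lemma aux_assoc_of (a b c : F) (x y z : Fin 3 → F) :
    triMul F !![0,0,a;1,0,b;0,1,c] !![0,a,a*c;0,b,a+b*c;1,c,b+c*c]
        (triMul F !![0,0,a;1,0,b;0,1,c] !![0,a,a*c;0,b,a+b*c;1,c,b+c*c] x y) z
      = triMul F !![0,0,a;1,0,b;0,1,c] !![0,a,a*c;0,b,a+b*c;1,c,b+c*c]
        x (triMul F !![0,0,a;1,0,b;0,1,c] !![0,a,a*c;0,b,a+b*c;1,c,b+c*c] y z) := by
  funext i
  fin_cases i <;>
    simp [triMul, Matrix.mulVec, dotProduct, Fin.sum_univ_three, Matrix.one_apply] <;>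
    ring

end AuxTri

/-- for `(I, Σ₁(k,k̂), Σ₂(k,k̂)) ∈ 𝒮` (with `1, k, φ(k,k̂)` linearly
independent over `F`, and `S1, S2` the matrices over `F` corresponding to
`Σ₁(k,k̂), Σ₂(k,k̂)`): (a) the multiplication is commutative iff
`k̂ ∈ {k, k^[1], k^[2]}`; in characteristic 2 the case `k̂ = k` cannot occur (there
`1, k, φ(k,k)` are linearly dependent); for `k̂ ∈ {k^[1], k^[2]}` one has `Σ₂ = Σ₁²`;
(b) the multiplication is associative iff `k̂ ∈ {k^[1], k^[2]}`. -/

theorem Sigma_commutative_associative (F : Type*) [Field F] [Fintype F]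
    (L : Type*) [Field L] [Algebra F L] (hL : Module.finrank F L = 3)
    (k khat : L)
    (hli : LinearIndependent F ![(1 : L), k, phiM F L k khat])
    (S1 S2 : Matrix (Fin 3) (Fin 3) F)
    (hS1 : S1.map (algebraMap F L) = Sig1 F L k khat)
    (hS2 : S2.map (algebraMap F L) = Sig2 F L k khat) :
    ((∀ x y : Fin 3 → F, triMul F S1 S2 x y = triMul F S1 S2 y x) ↔
      (khat = k ∨ khat = frk F L 1 k ∨ khat = frk F L 2 k)) ∧
    (ringChar F = 2 → khat ≠ k) ∧
    (∀ k' : L, ringChar F = 2 → ¬ LinearIndependent F ![(1 : L), k', phiM F L k' k']) ∧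
    ((khat = frk F L 1 k ∨ khat = frk F L 2 k) → Sig2 F L k khat = Sig1 F L k khat ^ 2) ∧
    ((∀ x y z : Fin 3 → F,
        triMul F S1 S2 (triMul F S1 S2 x y) z = triMul F S1 S2 x (triMul F S1 S2 y z)) ↔
      (khat = frk F L 1 k ∨ khat = frk F L 2 k))  := by
  classical
  have inj : Function.Injective (algebraMap F L) := (algebraMap F L).injective
  haveI : FiniteDimensional F L := FiniteDimensional.of_finrank_pos (by rw [hL]; norm_num)
  haveI : Finite L := Module.finite_of_finite F
  haveI : Fintype L := Fintype.ofFinite L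
  have hcard : Fintype.card L = Fintype.card F ^ 3 := by
    rw [Module.card_eq_pow_finrank (K := F) (V := L), hL]
  have hq3 : ∀ x : L, x ^ (Fintype.card F ^ 3) = x := fun x => by
    rw [← hcard]; exact FiniteField.pow_card x
  have ent1 : ∀ i j, algebraMap F L (S1 i j) = Sig1 F L k khat i j := by
    intro i j; rw [← hS1]; rfl
  have ent2 : ∀ i j, algebraMap F L (S2 i j) = Sig2 F L k khat i j := by
    intro i j; rw [← hS2]; rfl
  set a : F := S1 0 2 with ha_def
  set b : F := S1 1 2 with hb_def
  set c : F := S1 2 2 with hc_def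
  have ha : algebraMap F L a = sig3 F L k := by have := ent1 0 2; simpa [Sig1] using this
  have hb : algebraMap F L b = -(sig2 F L k) := by have := ent1 1 2; simpa [Sig1] using this
  have hc : algebraMap F L c = sig1 F L k := by have := ent1 2 2; simpa [Sig1] using this
  have hS1' : S1 = !![0,0,a;1,0,b;0,1,c] := by
    ext i j
    fin_cases i <;> fin_cases j <;>
      (apply inj; rw [ent1]; simp [Sig1, ha, hb, hc])
  set a2 : F := S2 0 1 with ha2_def
  set b2 : F := S2 1 1 with hb2_def
  set c2 : F := S2 2 1 with hc2_def
  set d : F := S2 0 2 with hd_def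
  set e : F := S2 1 2 with he_def
  set g : F := S2 2 2 with hg_def
  have ha2 : algebraMap F L a2 = sig3 F L khat := by have := ent2 0 1; simpa [Sig2] using this
  have hb2 : algebraMap F L b2 = -(sig2 F L khat) := by have := ent2 1 1; simpa [Sig2] using this
  have hc2 : algebraMap F L c2 = sig1 F L khat := by have := ent2 2 1; simpa [Sig2] using this
  have hd : algebraMap F L d
      = sig1 F L k * sig3 F L khat + sig1 F L khat * sig3 F L k - sig2 F L (k * khat) := by
    have := ent2 0 2; simpa [Sig2] using this
  have he : algebraMap F L e = -(sig3 F L (k + khat)) := by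
    have := ent2 1 2; simpa [Sig2] using this
  have hg : algebraMap F L g = sig1 F L k * sig1 F L khat - sig1 F L (k * khat) := by
    have := ent2 2 2; simpa [Sig2] using this
  have hS2' : S2 = !![0,a2,d;0,b2,e;1,c2,g] := by
    ext i j
    fin_cases i <;> fin_cases j <;>
      (apply inj; rw [ent2]; simp [Sig2, ha2, hb2, hc2, hd, he, hg])
  -- σ equalities from the three column conditions
  have conj_of3 : a2 = a → b2 = b → c2 = c →
      (khat = k ∨ khat = frk F L 1 k ∨ khat = frk F L 2 k) := by
    intro h1 h2 h3
    refine aux_conj hq3 ?_ ?_ ?_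
    · rw [← hc2, h3, hc]
    · have : algebraMap F L b2 = algebraMap F L b := by rw [h2]
      rw [hb2, hb] at this
      exact neg_injective this
    · rw [← ha2, h1, ha]
  have three_of_conj : (khat = k ∨ khat = frk F L 1 k ∨ khat = frk F L 2 k) →
      (a2 = a ∧ b2 = b ∧ c2 = c) := by
    intro h
    have e1 : sig1 F L khat = sig1 F L k := by
      rcases h with rfl | rfl | rfl
      · rfl
      · exact sig1_frk1 hq3 k
      · exact sig1_frk2 hq3 k
    have e2 : sig2 F L khat = sig2 F L k := by
      rcases h with rfl | rfl | rfl
      · rfl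
      · exact sig2_frk1 hq3 k
      · exact sig2_frk2 hq3 k
    have e3 : sig3 F L khat = sig3 F L k := by
      rcases h with rfl | rfl | rfl
      · rfl
      · exact sig3_frk1 hq3 k
      · exact sig3_frk2 hq3 k
    refine ⟨inj ?_, inj ?_, inj ?_⟩
    · rw [ha2, ha, e3]
    · rw [hb2, hb, e2]
    · rw [hc2, hc, e1]
  -- the six equalities for khat conjugate (Frobenius) to k
  have six_of_conj : (khat = frk F L 1 k ∨ khat = frk F L 2 k) →
      (a2 = a ∧ b2 = b ∧ c2 = c ∧ d = a * c ∧ e = a + b * c ∧ g = b + c * c) := by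
    intro h
    obtain ⟨h1, h2, h3⟩ := three_of_conj (Or.inr h)
    refine ⟨h1, h2, h3, inj ?_, inj ?_, inj ?_⟩
    · rw [hd, _root_.map_mul, ha, hc]
      rcases h with rfl | rfl
      · rw [sig1_frk1 hq3, sig3_frk1 hq3, sig2_mulf1 hq3]; ring
      · rw [sig1_frk2 hq3, sig3_frk2 hq3, sig2_mulf2 hq3]; ring
    · rw [he, map_add, _root_.map_mul, ha, hb, hc]
      rcases h with rfl | rfl
      · rw [sig3_addf1 hq3]; ring
      · rw [sig3_addf2 hq3]; ring
    · rw [hg, map_add, _root_.map_mul, hb, hc]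
      rcases h with rfl | rfl
      · rw [sig1_frk1 hq3, sig1_mulf1 hq3]; ring
      · rw [sig1_frk2 hq3, sig1_mulf2 hq3]; ring
  -- part 3 : characteristic 2 degeneracy
  have part3 : ∀ k' : L, ringChar F = 2 → ¬ LinearIndependent F ![(1 : L), k', phiM F L k' k'] := by
    intro k' h2 hind
    haveI : CharP F 2 := h2 ▸ ringChar.charP F
    haveI : CharP L 2 := charP_of_injective_algebraMap inj 2
    have h2L : (2 : L) = 0 := by
      have := CharP.cast_eq_zero L 2
      simpa using this
    obtain ⟨cc, hcc⟩ := aux_fixed_mem_range F L (sig2 F L k') (by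
      have := sig2_fixed hq3 k'
      simpa [frk, pow_one] using this)
    have hphi : phiM F L k' k' = -(algebraMap F L cc) := by
      rw [phiM, hcc]
      have : k' + k' = 0 := by
        have : k' + k' = (2 : L) * k' := by ring
        rw [this, h2L, zero_mul]
      rw [this, zero_mul, zero_sub]
    have := Fintype.linearIndependent_iff.1 hind ![cc, 0, 1] (by
      simp [Fin.sum_univ_three, hphi, Algebra.smul_def])
    have h1 : (1 : F) = 0 := by simpa using this 2
    exact one_ne_zero h1
  -- commutativity iff
  have comm_iff : (∀ x y : Fin 3 → F, triMul F S1 S2 x y = triMul F S1 S2 y x) ↔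
      (khat = k ∨ khat = frk F L 1 k ∨ khat = frk F L 2 k) := by
    constructor
    · intro h
      have h' := h ![0,1,0] ![0,0,1]
      rw [hS1', hS2'] at h'
      have e0 := congrFun h' 0
      have e1 := congrFun h' 1
      have e2 := congrFun h' 2
      simp [triMul, Matrix.mulVec, dotProduct, Fin.sum_univ_three,
        Matrix.one_apply] at e0 e1 e2
      exact conj_of3 e0.symm e1.symm e2.symm
    · intro h
      obtain ⟨h1, h2, h3⟩ := three_of_conj h
      intro x y
      rw [hS1', hS2', h1, h2, h3]
      exact aux_comm_of a b c d e g x y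
  refine ⟨comm_iff, ?_, part3, fun h => Sig2_eq_sq hq3 k h, ?_⟩
  · -- char 2 : khat ≠ k
    rintro h2 rfl
    exact part3 khat h2 hli
  · -- associativity iff
    constructor
    · intro h
      -- extract the six equations
      have k1 := h ![0,1,0] ![0,1,0] ![0,1,0]
      have k2 := h ![0,1,0] ![0,1,0] ![0,0,1]
      rw [hS1', hS2'] at k1 k2
      have e10 := congrFun k1 0
      have e11 := congrFun k1 1
      have e12 := congrFun k1 2
      have e20 := congrFun k2 0
      have e21 := congrFun k2 1
      have e22 := congrFun k2 2
      simp [triMul, Matrix.mulVec, dotProduct, Fin.sum_univ_three,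
        Matrix.one_apply] at e10 e11 e12 e20 e21 e22
      -- e1j : a2 = a etc ; e2j : d = a*c etc  (to be fixed after inspection)
      rcases conj_of3 e10 e11 e12 with hk | h | h
      · -- khat = k : show k is Frobenius-fixed
        rw [hk] at hd he hg
        -- mapped equations
        have hdL : sig1 F L k * sig3 F L k + sig1 F L k * sig3 F L k - sig2 F L (k * k)
            = sig3 F L k * sig1 F L k := by
          rw [← hd, e20, _root_.map_mul, ha, hc]
        have heL : -(sig3 F L (k + k)) = sig3 F L k + -(sig2 F L k) * sig1 F L k := by
          rw [← he, e21, map_add, _root_.map_mul, ha, hb, hc]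
        have hgL : sig1 F L k * sig1 F L k - sig1 F L (k * k)
            = -(sig2 F L k) + sig1 F L k * sig1 F L k := by
          rw [← hg, e22, map_add, _root_.map_mul, hb, hc]
        simp only [sig1, sig2, sig3, aux_ftwo, aux_fmul, aux_fadd, aux_fcyc hq3]
          at hdL heL hgL
        set A : L := frk F L 1 k with hA_def
        set B : L := frk F L 1 A with hB_def
        have hkA : k = A := by
          by_cases h3 : (3 : L) = 0
          · have hsq : (k + A + B) ^ 2 = 0 := by
              linear_combination -hgL + (k * A + k * B + A * B) * h3
            have hs1 : k + A + B = 0 := by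
              have := pow_eq_zero_iff (n := 2) (by norm_num) |>.1 hsq
              exact this
            have hs2sq : (k * A + k * B + A * B) ^ 2 = 0 := by
              linear_combination -hdL + 3 * (k * A * B) * hs1
            have hs2 : k * A + k * B + A * B = 0 := by
              have := pow_eq_zero_iff (n := 2) (by norm_num) |>.1 hs2sq
              exact this
            have hd3 : (k - A) ^ 3 = 0 := by
              linear_combination (k ^ 2 - A ^ 2) * hs1 + (A - k) * hs2
                + (- k * A * (k - A)) * h3
            have := pow_eq_zero_iff (n := 3) (by norm_num) |>.1 hd3
            exact sub_eq_zero.1 this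
          · have key : (2 * k - A - B) ^ 3 = 0 := by
              linear_combination ((k + A + B) - 9 * k) * hgL - 3 * heL
            have h0 : 2 * k - A - B = 0 :=
              pow_eq_zero_iff (n := 3) (by norm_num) |>.1 key
            have h0' : A + B = k + k := by linear_combination -h0
            have h1' : frk F L 1 (A + B) = frk F L 1 (k + k) := by rw [h0']
            rw [aux_fadd, aux_fadd] at h1'
            have hfB : frk F L 1 B = k := by
              rw [hB_def, hA_def]; exact aux_fcyc hq3 k
            rw [hfB] at h1'
            -- h1' : B + k = A + A
            have h3k : (3 : L) * (k - A) = 0 := by linear_combination h1' - h0'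
            rcases mul_eq_zero.1 h3k with hc3 | hkk
            · exact absurd hc3 h3
            · exact sub_eq_zero.1 hkk
        rw [hk]
        exact Or.inl hkA
      · exact Or.inl h
      · exact Or.inr h
    · intro h x y z
      obtain ⟨h1, h2, h3, h4, h5, h6⟩ := six_of_conj h
      rw [hS1', hS2', h1, h2, h3, h4, h5, h6]
      exact aux_assoc_of a b c x y z
end
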